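/- Let 𝓗 be a Hopf algebra over a field k with antipode S, and suppose T: 𝓗 → 𝓗 is an anti-algebra map satisfying T(h⁽¹⁾)⁽¹⁾h⁽²⁾ ⊗ T(h⁽¹⁾)⁽²⁾ = 1 ⊗ T(h) for all h ∈ 𝓗. Then δ := ε∘T is an algebra map 𝓗 → k and T = δ * S, i.e. T(h) = δ(h⁽¹⁾)S(h⁽²⁾) for all h. -/

import Mathlib

open TensorProduct Coalgebra

noncomputable section

variable {k 𝓗 : Type} [Field k] [Ring 𝓗] [HopfAlgebra k 𝓗]

/-- The convolution `δ * S` for a character `δ : 𝓗 → k`: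
`h ↦ δ(h⁽¹⁾) S(h⁽²⁾)`. -/
def twistedAntipode (δ : 𝓗 →ₐ[k] k) : 𝓗 →ₗ[k] 𝓗 :=
  (TensorProduct.lift
    (LinearMap.mk₂ k (fun x y => δ x • HopfAlgebra.antipode (R := k) y)
      (by intro x x' y; simp [map_add, add_smul])
      (by intro c x y; simp [mul_smul])
      (by intro x y y'; simp [map_add, smul_add])
      (by intro c x y; simp only [map_smul]; rw [smul_comm]))) ∘ₗ comul

/-- The (lift of the) degree-2 cyclic operator for a linear map `T`:
`x ⊗ y ↦ Δ(T x) · (y ⊗ 1)`. -/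
def tau2Hopf (T : 𝓗 →ₗ[k] 𝓗) : 𝓗 ⊗[k] 𝓗 →ₗ[k] 𝓗 ⊗[k] 𝓗 :=
  TensorProduct.lift
    (LinearMap.mk₂ k (fun x y => comul (R := k) (T x) * (y ⊗ₜ[k] (1 : 𝓗)))
      (by intro x x' y; simp [map_add, add_mul])
      (by intro c x y; simp [map_smul, smul_mul_assoc])
      (by intro x y y'; simp [add_tmul, mul_add])
      (by intro c x y; simp [← TensorProduct.smul_tmul', mul_smul_comm]))

lemma tau2Hopf_tmul (T : 𝓗 →ₗ[k] 𝓗) (x y : 𝓗) :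
    tau2Hopf T (x ⊗ₜ[k] y) = comul (R := k) (T x) * (y ⊗ₜ[k] (1 : 𝓗)) := rfl

/-- `Φ : a ⊗ b ↦ a * η(ε b)`. -/
def Phi : 𝓗 ⊗[k] 𝓗 →ₗ[k] 𝓗 :=
  LinearMap.mul' k 𝓗 ∘ₗ
    LinearMap.lTensor 𝓗 ((Algebra.linearMap k 𝓗) ∘ₗ counit)

lemma Phi_tmul (a b : 𝓗) :
    Phi (a ⊗ₜ[k] b) = a * algebraMap k 𝓗 (counit (R := k) b) := rfl

lemma Phi_mul_tmul_one (u : 𝓗 ⊗[k] 𝓗) (y : 𝓗) :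
    Phi (u * (y ⊗ₜ[k] (1 : 𝓗))) = Phi u * y := by
  induction u using TensorProduct.induction_on with
  | zero => simp
  | tmul a b =>
      rw [Algebra.TensorProduct.tmul_mul_tmul, mul_one, Phi_tmul, Phi_tmul,
        mul_assoc, mul_assoc, Algebra.commutes]
  | add u v hu hv => rw [add_mul, map_add, hu, hv, map_add, add_mul]

lemma Phi_comul (z : 𝓗) : Phi (comul (R := k) z) = z := by
  rw [Phi]
  simp only [LinearMap.comp_apply, LinearMap.lTensor_comp, lTensor_counit_comul]
  simp

lemma sum_smul_counit {ι : Type*} (z : 𝓗) (rz : Coalgebra.Repr k z ι) :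
    ∑ i ∈ rz.index, counit (R := k) (rz.right i) • rz.left i = z := by
  have := congrArg (TensorProduct.rid k 𝓗) (Coalgebra.sum_tmul_counit_eq rz)
  rw [map_sum] at this
  simp only [TensorProduct.rid_tmul, one_smul] at this
  exact this

/-- Step A: `T ∗ id = η ∘ δ` where `δ = ε ∘ T`. -/
lemma stepA (T : 𝓗 →ₗ[k] 𝓗)
    (hcyc : ∀ h : 𝓗, tau2Hopf T (comul h) = (1 : 𝓗) ⊗ₜ[k] T h)
    {ι : Type*} (z : 𝓗) (rz : Coalgebra.Repr k z ι) :
    ∑ i ∈ rz.index, T (rz.left i) * rz.right i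
      = algebraMap k 𝓗 (counit (R := k) (T z)) := by
  have h1 := hcyc z
  rw [← rz.eq, map_sum] at h1
  simp only [tau2Hopf_tmul] at h1
  have h2 := congrArg (Phi (k := k) (𝓗 := 𝓗)) h1
  rw [map_sum] at h2
  simp only [Phi_mul_tmul_one, Phi_comul, Phi_tmul, one_mul] at h2
  exact h2

/-- `Ψ : x ⊗ (y ⊗ z) ↦ T x * (y * S z)`. -/
def Psi (T : 𝓗 →ₗ[k] 𝓗) : 𝓗 ⊗[k] (𝓗 ⊗[k] 𝓗) →ₗ[k] 𝓗 :=
  LinearMap.mul' k 𝓗 ∘ₗ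
    TensorProduct.map T
      (LinearMap.mul' k 𝓗 ∘ₗ
        TensorProduct.map LinearMap.id (HopfAlgebra.antipode (R := k)))

lemma Psi_tmul (T : 𝓗 →ₗ[k] 𝓗) (x y z : 𝓗) :
    Psi T (x ⊗ₜ[k] (y ⊗ₜ[k] z)) = T x * (y * HopfAlgebra.antipode (R := k) z) := rfl

theorem antiAlg_cyclic_iff_twistedAntipode (T : 𝓗 →ₗ[k] 𝓗)
    (hT1 : T 1 = 1) (hTm : ∀ a b : 𝓗, T (a * b) = T b * T a)
    (hcyc : ∀ h : 𝓗, tau2Hopf T (comul h) = (1 : 𝓗) ⊗ₜ[k] T h) :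
    (counit (R := k) (T 1) = 1) ∧
    (∀ a b : 𝓗, counit (R := k) (T (a * b)) = counit (R := k) (T a) * counit (R := k) (T b)) ∧
    (∀ h : 𝓗,
      T h = (TensorProduct.lift
        (LinearMap.mk₂ k (fun x y => counit (R := k) (T x) • HopfAlgebra.antipode (R := k) y)
          (by intro x x' y; simp [map_add, add_smul])
          (by intro c x y; simp [mul_smul])
          (by intro x y y'; simp [map_add, smul_add])
          (by intro c x y; simp only [map_smul]; rw [smul_comm]))) (comul h)) := by
  refine ⟨by rw [hT1]; simp, ?_, ?_⟩
  · intro a b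
    rw [hTm, Bialgebra.counit_mul, mul_comm]
  · intro h
    set r : Coalgebra.Repr k h (𝓗 × 𝓗) := ℛ k h with hr
    have key := Coalgebra.sum_tmul_tmul_eq (R := k) r
      (fun i => ℛ k (r.left i)) (fun i => ℛ k (r.right i))
    have key2 := congrArg (Psi T) key
    rw [map_sum, map_sum] at key2
    simp only [map_sum, Psi_tmul] at key2
    -- right-hand side of key2 equals T h
    have hR : ∑ i ∈ r.index, ∑ j ∈ (ℛ k (r.right i)).index,
        T (r.left i) * ((ℛ k (r.right i)).left j *
          HopfAlgebra.antipode (R := k) ((ℛ k (r.right i)).right j)) = T h := by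
      calc ∑ i ∈ r.index, ∑ j ∈ (ℛ k (r.right i)).index,
            T (r.left i) * ((ℛ k (r.right i)).left j *
              HopfAlgebra.antipode (R := k) ((ℛ k (r.right i)).right j))
          = ∑ i ∈ r.index, counit (R := k) (r.right i) • T (r.left i) := by
            refine Finset.sum_congr rfl fun i _ => ?_
            rw [← Finset.mul_sum, HopfAlgebra.sum_mul_antipode_eq_algebraMap_counit (ℛ k (r.right i)),
              ← Algebra.commutes, ← Algebra.smul_def]
        _ = T (∑ i ∈ r.index, counit (R := k) (r.right i) • r.left i) := by
            rw [map_sum]; simp only [map_smul]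
        _ = T h := by rw [sum_smul_counit]
    -- left-hand side of key2 equals the twisted antipode value
    have hL : ∑ i ∈ r.index, ∑ j ∈ (ℛ k (r.left i)).index,
        T ((ℛ k (r.left i)).left j) * ((ℛ k (r.left i)).right j *
          HopfAlgebra.antipode (R := k) (r.right i))
        = ∑ i ∈ r.index,
            counit (R := k) (T (r.left i)) • HopfAlgebra.antipode (R := k) (r.right i) := by
      refine Finset.sum_congr rfl fun i _ => ?_
      simp only [← mul_assoc]
      rw [← Finset.sum_mul, stepA T hcyc _ (ℛ k (r.left i)), ← Algebra.smul_def]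
    rw [← r.eq, map_sum]
    simp only [TensorProduct.lift.tmul, LinearMap.mk₂_apply]
    rw [← hR, ← key2, hL]
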